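/- The number of elements a of the m-Tamari lattice T_n^(m) with μ(0̂, a) ≠ 0 equals 2^{n-1}, where 0̂ is the minimal element and μ is the Möbius function. -/

import Mathlib

open scoped Classical

/-- An `m`-Dyck sequence of height `n` (0-indexed): weakly increasing with `a i ≤ m * i`. -/
def IsDyck (m n : ℕ) (a : Fin n → ℕ) : Prop :=
  Monotone a ∧ ∀ i : Fin n, a i ≤ m * i.val

/-- `k` is the last index of the primitive subsequence of `a` at position `i`. -/
def IsPrimEnd (m n : ℕ) (a : Fin n → ℕ) (i k : Fin n) : Prop :=
  i ≤ k ∧ (∀ j : Fin n, i < j → j ≤ k → a j - a i < m * (j.val - i.val)) ∧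
    (k.val + 1 = n ∨ ∃ h : k.val + 1 < n, m * (k.val + 1 - i.val) ≤ a ⟨k.val + 1, h⟩ - a i)

/-- The covering relation of the `m`-Tamari lattice: decrease the primitive
subsequence at a position `i+1` with `a i < a (i+1)` by one. -/
def Covers (m n : ℕ) (a b : Fin n → ℕ) : Prop :=
  ∃ (i : ℕ) (h : i + 1 < n) (k : Fin n),
    a ⟨i, Nat.lt_of_succ_lt h⟩ < a ⟨i + 1, h⟩ ∧
    IsPrimEnd m n a ⟨i + 1, h⟩ k ∧
    b = fun j => if (⟨i + 1, h⟩ : Fin n) ≤ j ∧ j ≤ k then a j - 1 else a j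

/-- The order of the `m`-Tamari lattice: reflexive-transitive closure of `Covers`. -/
def TamariLE (m n : ℕ) (a b : Fin n → ℕ) : Prop :=
  Relation.ReflTransGen (Covers m n) a b

/-- The elements of the `m`-Tamari lattice `T_n^(m)`. -/
def Tam (m n : ℕ) : Type := {a : Fin n → ℕ // IsDyck m n a}

/-- `μ` is the Möbius function of `T_n^(m)`. -/
def IsMobius (m n : ℕ) (μ : Tam m n → Tam m n → ℤ) : Prop :=
  ∀ a b : Tam m n, TamariLE m n a.1 b.1 →
    ∑ᶠ c ∈ {c : Tam m n | TamariLE m n a.1 c.1 ∧ TamariLE m n c.1 b.1}, μ a c =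
      if a = b then 1 else 0

/-- The minimal element `(0, m, 2m, …, (n-1)m)` of `T_n^(m)`. -/
def botSeq (m n : ℕ) : Fin n → ℕ := fun i => m * i.val

lemma botSeq_isDyck (m n : ℕ) : IsDyck m n (botSeq m n) :=
  ⟨fun i j h => Nat.mul_le_mul_left m h, fun _ => le_rfl⟩

/-- The maximal element `(0, 0, …, 0)` of `T_n^(m)`. -/
def topSeq (n : ℕ) : Fin n → ℕ := fun _ => 0

lemma topSeq_isDyck (m n : ℕ) : IsDyck m n (topSeq n) :=
  ⟨monotone_const, fun _ => Nat.zero_le _⟩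

/-- The set `D` of indices where two sequences differ and `a` has an ascent. -/
noncomputable def Dset (n : ℕ) (a b : ℕ → ℕ) : Finset ℕ :=
  (Finset.range n).filter (fun j => 1 ≤ j ∧ a j ≠ b j ∧ a (j - 1) < a j)

/-- The quantity `ps(a, j)` from the paper, relative to a set `D` of indices. -/
noncomputable def ps (m : ℕ) (D : Finset ℕ) (a : ℕ → ℕ) (j : ℕ) : ℕ :=
  (D.filter (fun i => i < j ∧ a j - 1 - a i < m * (j - i) ∧
    ∀ k, i < k → k < j → a k - a i < m * (k - i))).card

/-- Pcond m a i k t : the "depth > t primitive" condition on `(i,k]`. -/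
def Pcond (m : ℕ) {n : ℕ} (a : Fin n → ℕ) (i k : Fin n) (t : ℕ) : Prop :=
  ∀ j : Fin n, i < j → j ≤ k → (a j : ℤ) - a i + t < m * ((j.val : ℤ) - i.val)

/-- Explicit characterization of the m-Tamari order. -/
def Phi (m : ℕ) {n : ℕ} (a b : Fin n → ℕ) : Prop :=
  (∀ i, b i ≤ a i) ∧
    ∀ t : ℕ, t < m → ∀ i k : Fin n, i < k → Pcond m a i k t → Pcond m b i k t

lemma phi_refl (m : ℕ) {n : ℕ} (a : Fin n → ℕ) : Phi m a a :=
  ⟨fun _ => le_rfl, fun _ _ _ _ _ hP => hP⟩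

lemma phi_trans {m n : ℕ} {a b c : Fin n → ℕ} (h1 : Phi m a b) (h2 : Phi m b c) :
    Phi m a c :=
  ⟨fun i => (h2.1 i).trans (h1.1 i),
   fun t ht i k hik hP => h2.2 t ht i k hik (h1.2 t ht i k hik hP)⟩

lemma covers_phi {m n : ℕ} {a b : Fin n → ℕ} (ha : IsDyck m n a) (hc : Covers m n a b) :
    IsDyck m n b ∧ Phi m a b := by
  obtain ⟨i, h, kc, hasc, ⟨hpk, hprim, hbd⟩, rfl⟩ := hc
  set p : Fin n := ⟨i + 1, h⟩ with hp
  have hap1 : 1 ≤ a p := Nat.one_le_iff_ne_zero.mpr (by omega)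
  have hmono := ha.1
  have hbeta : ∀ x : Fin n,
      ((fun j => if p ≤ j ∧ j ≤ kc then a j - 1 else a j) x) =
        if p ≤ x ∧ x ≤ kc then a x - 1 else a x := fun _ => rfl
  -- pointwise
  have hpw : ∀ j : Fin n, (if p ≤ j ∧ j ≤ kc then a j - 1 else a j) ≤ a j := by
    intro j; split <;> omega
  have hge1 : ∀ j : Fin n, p ≤ j → 1 ≤ a j := fun j hj => hap1.trans (hmono hj)
  constructor
  · constructor
    · intro j1 j2 h12
      simp only [hbeta]
      by_cases h1 : p ≤ j1 ∧ j1 ≤ kc <;> by_cases h2 : p ≤ j2 ∧ j2 ≤ kc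
      · simp only [if_pos h1, if_pos h2]; have := hmono h12; omega
      · simp only [if_pos h1, if_neg h2]; have := hmono h12; omega
      · simp only [if_neg h1, if_pos h2]
        have hj1p : j1 < p := by
          rcases not_and_or.mp h1 with h' | h'
          · exact lt_of_not_ge h'
          · exact absurd (h12.trans h2.2) h'
        have hj1i : j1 ≤ ⟨i, Nat.lt_of_succ_lt h⟩ := by
          rw [Fin.le_def]; rw [Fin.lt_def] at hj1p; simp only [hp] at hj1p ⊢; omega
        have := (hmono hj1i).trans_lt hasc
        have := hmono h2.1
        omega
      · simp only [if_neg h1, if_neg h2]; exact hmono h12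
    · intro j; exact le_trans (by rw [hbeta]; exact hpw j) (ha.2 j)
  · refine ⟨fun j => by rw [hbeta]; exact hpw j, ?_⟩
    intro t ht i0 k0 hik hP j hj1 hj2
    simp only [hbeta]
    by_cases hsegi : p ≤ i0 ∧ i0 ≤ kc
    · -- i0 in segment; first show j is in segment too
      have hsegj : p ≤ j ∧ j ≤ kc := by
        refine ⟨le_of_lt (lt_of_le_of_lt hsegi.1 hj1), ?_⟩
        by_contra hjk
        have hkj : kc < j := lt_of_not_ge hjk
        have hkc1 : kc.val + 1 < n := by
          have := j.isLt; rw [Fin.lt_def] at hkj; omega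
        rcases hbd with hbd | ⟨hlt, hge⟩
        · omega
        set jq : Fin n := ⟨kc.val + 1, hlt⟩ with hjq
        have hi0kc : i0.val ≤ kc.val := hsegi.2
        have hiple : p.val ≤ i0.val := hsegi.1
        have hjk0 : j.val ≤ k0.val := hj2
        have hkcj : kc.val < j.val := hkj
        have hPq := hP jq (by rw [Fin.lt_def]; show i0.val < kc.val + 1; omega)
                      (by rw [Fin.le_def]; show kc.val + 1 ≤ k0.val; omega)
        have hpi0 : a p ≤ a i0 := hmono hsegi.1
        have hpjq : a p ≤ a jq := hmono (by rw [Fin.le_def]; show p.val ≤ kc.val + 1; omega)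
        have hple : p.val ≤ kc.val + 1 := by omega
        have h2 : (m : ℤ) * ((kc.val + 1 : ℤ) - p.val) ≤ (a jq : ℤ) - a p := by
          zify [hpjq, hple] at hge; convert hge using 2 <;> push_cast <;> ring
        have h1 : (a jq : ℤ) - a i0 + t < (m : ℤ) * ((kc.val + 1 : ℤ) - i0.val) := by
          have hv : ((jq.val : ℤ)) = (kc.val + 1 : ℤ) := by simp [hjq]
          rw [hv] at hPq; exact hPq
        have ht0 : (0 : ℤ) ≤ t := Int.ofNat_nonneg t
        have hring : (m : ℤ) * ((kc.val + 1 : ℤ) - p.val) =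
            (m : ℤ) * ((kc.val + 1 : ℤ) - i0.val) + (m : ℤ) * ((i0.val : ℤ) - p.val) := by
          ring
        rcases eq_or_lt_of_le hsegi.1 with heq | hppi
        · -- i0 = p
          have e1 : (a i0 : ℤ) = a p := by rw [heq]
          have hz : (m : ℤ) * ((i0.val : ℤ) - p.val) = 0 := by rw [← heq]; ring
          linarith
        · have h3 : (a i0 : ℤ) - a p < (m : ℤ) * ((i0.val : ℤ) - p.val) := by
            have hh := hprim i0 hppi hsegi.2
            zify [hpi0, le_of_lt (show p.val < i0.val from hppi)] at hh
            convert hh using 2 <;> push_cast <;> ring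
          linarith
      -- now both in segment
      simp only [if_pos hsegi, if_pos hsegj]
      have h1 : 1 ≤ a i0 := hge1 i0 hsegi.1
      have h2 : 1 ≤ a j := hge1 j hsegj.1
      have h3 := hP j hj1 hj2
      zify [h1, h2]
      linarith
    · -- i0 not in segment
      simp only [if_neg hsegi]
      have h3 := hP j hj1 hj2
      have hbj : ((if p ≤ j ∧ j ≤ kc then a j - 1 else a j : ℕ) : ℤ) ≤ (a j : ℤ) :=
        Int.ofNat_le.mpr (hpw j)
      linarith

/-- height function in ℤ -/
def hza (m : ℕ) {n : ℕ} (a : Fin n → ℕ) (j : Fin n) : ℤ := m * j.val - a j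

lemma pcond_iff_hza {m n : ℕ} {a : Fin n → ℕ} {i k : Fin n} {t : ℕ} :
    Pcond m a i k t ↔ ∀ j : Fin n, i < j → j ≤ k → (t : ℤ) < hza m a j - hza m a i := by
  unfold Pcond hza
  constructor <;> intro H j h1 h2 <;> have := H j h1 h2 <;>
    [skip; skip] <;>
    · have hr : (m : ℤ) * ((j.val : ℤ) - i.val) = m * j.val - m * i.val := by ring
      linarith [this, hr]

lemma phi_tamle {m n : ℕ} (hm : 0 < m) {b : Fin n → ℕ} (hb : IsDyck m n b) :
    ∀ N (a : Fin n → ℕ), (∑ j, a j) = N → IsDyck m n a → Phi m a b → TamariLE m n a b := by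
  intro N
  induction N using Nat.strong_induction_on with
  | _ N ih =>
  intro a hN ha hphi
  by_cases hab : a = b
  · subst hab; exact Relation.ReflTransGen.refl
  have hmono := ha.1
  -- minimal difference position p
  have hneS : (Finset.univ.filter (fun j : Fin n => b j < a j)).Nonempty := by
    obtain ⟨j, hj⟩ := Function.ne_iff.mp hab
    exact ⟨j, Finset.mem_filter.mpr ⟨Finset.mem_univ _, lt_of_le_of_ne (hphi.1 j) hj.symm⟩⟩
  set S := Finset.univ.filter (fun j : Fin n => b j < a j) with hS
  set p := S.min' hneS with hpdef
  have hpS : b p < a p := (Finset.mem_filter.mp (S.min'_mem hneS)).2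
  have hpmin : ∀ q : Fin n, q < p → b q = a q := by
    intro q hq
    by_contra hne
    have : q ∈ S := Finset.mem_filter.mpr ⟨Finset.mem_univ _,
      lt_of_le_of_ne (hphi.1 q) hne⟩
    exact absurd (S.min'_le q this) (not_le.mpr hq)
  have hp0 : 0 < p.val := by
    rcases Nat.eq_zero_or_pos p.val with h0 | h0
    · exfalso
      have h1 : a p ≤ m * p.val := ha.2 p
      rw [h0] at h1; simp at h1; omega
    · exact h0
  have hpm1lt : p.val - 1 < n := by have := p.isLt; omega
  set pm1 : Fin n := ⟨p.val - 1, hpm1lt⟩ with hpm1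
  have hpm1p : pm1 < p := by rw [Fin.lt_def]; show p.val - 1 < p.val; omega
  have hbeq : b pm1 = a pm1 := hpmin pm1 hpm1p
  have hasc : a pm1 < a p := by
    have h1 : b pm1 ≤ b p := hb.1 (le_of_lt hpm1p)
    omega
  -- primitive end k0
  set Q : ℕ → Prop := fun kv => kv < n ∧ p.val ≤ kv ∧
    (∀ j : Fin n, p < j → j.val ≤ kv → (a j : ℤ) - a p < m * ((j.val : ℤ) - p.val)) with hQdef
  have hQp : Q p.val := ⟨p.isLt, le_rfl, fun j hj1 hj2 => by
    rw [Fin.lt_def] at hj1; omega⟩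
  have hple : p.val ≤ n - 1 := by have := p.isLt; omega
  have hQk0 : Q (Nat.findGreatest Q (n - 1)) := Nat.findGreatest_spec hple hQp
  set k0v := Nat.findGreatest Q (n - 1) with hk0v
  obtain ⟨hk0n, hpk0, hprimz⟩ := hQk0
  set k0 : Fin n := ⟨k0v, hk0n⟩ with hk0
  have hprimN : ∀ j : Fin n, p < j → j ≤ k0 → a j - a p < m * (j.val - p.val) := by
    intro j h1 h2
    have h3 := hprimz j h1 h2
    have h4 : a p ≤ a j := hmono (le_of_lt h1)
    have h5 : p.val ≤ j.val := le_of_lt h1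
    zify [h4, h5]
    have hr : (m : ℤ) * ((j.val : ℤ) - p.val) = m * j.val - m * p.val := by ring
    linarith
  have hprimend : IsPrimEnd m n a p k0 := by
    refine ⟨hpk0, hprimN, ?_⟩
    by_cases hke : k0v + 1 = n
    · exact Or.inl hke
    · have hklt : k0v + 1 < n := by omega
      refine Or.inr ⟨hklt, ?_⟩
      have hnQ : ¬ Q (k0v + 1) :=
        Nat.findGreatest_is_greatest (by rw [← hk0v]; omega) (by omega)
      obtain ⟨j, hj1, hj2, hj3⟩ : ∃ j : Fin n, p < j ∧ j.val ≤ k0v + 1 ∧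
          (m : ℤ) * ((j.val : ℤ) - p.val) ≤ (a j : ℤ) - a p := by
        by_contra hcon
        push_neg at hcon
        exact hnQ ⟨hklt, by omega, fun j h1 h2 => hcon j h1 h2⟩
      have hjval : j.val = k0v + 1 := by
        by_contra hne
        have hlt : j.val ≤ k0v := by omega
        exact absurd (hprimz j hj1 hlt) (not_lt.mpr hj3)
      have hjeq : j = ⟨k0v + 1, hklt⟩ := Fin.ext hjval
      rw [← hjeq]
      have h4 : a p ≤ a j := hmono (le_of_lt hj1)
      have h3 := hj3
      zify [h4, (Nat.le_succ_of_le hpk0 : p.val ≤ k0.val + 1)]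
      have hr : (m : ℤ) * ((j.val : ℤ) - p.val) = m * (j.val : ℤ) - m * p.val := by ring
      rw [hjval] at hr h3
      push_cast at h3 hr ⊢
      have hk0val : (k0.val : ℤ) = k0v := rfl
      linarith
  -- the cover c
  set c : Fin n → ℕ := fun j => if p ≤ j ∧ j ≤ k0 then a j - 1 else a j with hcdef
  have hpk0fin : p ≤ k0 := by rw [Fin.le_def]; exact hpk0
  have hap1 : 1 ≤ a p := by omega
  have e2 : ∀ hh : p.val - 1 + 1 < n, (⟨p.val - 1 + 1, hh⟩ : Fin n) = p :=
    fun hh => Fin.ext (by simp; omega)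
  have hcov : Covers m n a c := by
    refine ⟨p.val - 1, by omega, k0, ?_, ?_, ?_⟩
    · rw [e2]
      exact hasc
    · rw [e2]
      exact hprimend
    · rw [e2]
  obtain ⟨hcDyck, hphiac⟩ := covers_phi ha hcov
  -- no equal position inside (p, k0]
  have hT : ∀ j : Fin n, p < j → j ≤ k0 → b j < a j := by
    intro j0 hj0p hj0k
    by_contra hbge
    have hbj0 : b j0 = a j0 := le_antisymm (hphi.1 j0) (not_lt.mp hbge)
    set T := Finset.univ.filter (fun x : Fin n => p < x ∧ x ≤ k0 ∧ b x = a x) with hTdef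
    have hTne : T.Nonempty :=
      ⟨j0, Finset.mem_filter.mpr ⟨Finset.mem_univ _, hj0p, hj0k, hbj0⟩⟩
    obtain ⟨j1, hj1T, hj1min⟩ := T.exists_min_image (hza m a) hTne
    set T2 := T.filter (fun x => hza m a x = hza m a j1) with hT2def
    have hT2ne : T2.Nonempty := ⟨j1, Finset.mem_filter.mpr ⟨hj1T, rfl⟩⟩
    set j2 := T2.min' hT2ne with hj2def
    have hj2T2 : j2 ∈ T2 := T2.min'_mem hT2ne
    have hj2T : j2 ∈ T := (Finset.mem_filter.mp hj2T2).1
    have hj2h : hza m a j2 = hza m a j1 := (Finset.mem_filter.mp hj2T2).2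
    obtain ⟨-, hpj2, hj2k0, hbj2⟩ := Finset.mem_filter.mp hj2T
    have hminval : ∀ x ∈ T, hza m a j2 ≤ hza m a x := fun x hx => hj2h ▸ hj1min x hx
    have hlexmin : ∀ x ∈ T, hza m a x = hza m a j2 → j2 ≤ x := by
      intro x hx hxe
      exact T2.min'_le x (Finset.mem_filter.mpr ⟨hx, by rw [hxe, hj2h]⟩)
    -- the index i
    have hhzp : hza m a p < hza m a j2 := by
      have h1 := hprimz j2 hpj2 hj2k0
      simp only [hza]
      have hr : (m : ℤ) * ((j2.val : ℤ) - p.val) = m * j2.val - m * p.val := by ring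
      linarith
    set Si := Finset.univ.filter
      (fun x : Fin n => p ≤ x ∧ x < j2 ∧ hza m a x < hza m a j2) with hSidef
    have hSine : Si.Nonempty :=
      ⟨p, Finset.mem_filter.mpr ⟨Finset.mem_univ _, le_rfl, hpj2, hhzp⟩⟩
    set i := Si.max' hSine with hidef
    have hiSi : p ≤ i ∧ i < j2 ∧ hza m a i < hza m a j2 :=
      (Finset.mem_filter.mp (Si.max'_mem hSine)).2
    have hamax : ∀ x : Fin n, i < x → x < j2 → hza m a j2 ≤ hza m a x := by
      intro x h1 h2
      by_contra hcon
      push_neg at hcon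
      have hxSi : x ∈ Si := Finset.mem_filter.mpr
        ⟨Finset.mem_univ _, le_trans hiSi.1 (le_of_lt h1), h2, hcon⟩
      exact absurd (Si.le_max' x hxSi) (not_le.mpr h1)
    have hbi : b i < a i := by
      rcases eq_or_lt_of_le hiSi.1 with he | hlt
      · exact he ▸ hpS
      · by_contra hcon
        have hbieq : b i = a i := le_antisymm (hphi.1 i) (not_lt.mp hcon)
        have hiT : i ∈ T := Finset.mem_filter.mpr
          ⟨Finset.mem_univ _, hlt, le_trans (le_of_lt hiSi.2.1) hj2k0, hbieq⟩
        exact absurd (hminval i hiT) (not_le.mpr hiSi.2.2)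
    -- violating t
    set Δ : ℤ := hza m a j2 - hza m a i with hΔdef
    have hΔ1 : 1 ≤ Δ := by simp only [hΔdef]; linarith [hiSi.2.2]
    set tz : ℤ := min Δ (m : ℤ) - 1 with htzdef
    have htz1 : 0 ≤ tz := by
      have h1 : (1 : ℤ) ≤ min Δ (m : ℤ) := le_min hΔ1 (by exact_mod_cast hm)
      simp only [htzdef]; linarith
    have htzm : tz ≤ (m : ℤ) - 1 := by
      simp only [htzdef]; linarith [min_le_right Δ (m : ℤ)]
    have htzΔ : tz ≤ Δ - 1 := by
      simp only [htzdef]; linarith [min_le_left Δ (m : ℤ)]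
    set t : ℕ := tz.toNat with htdef
    have htcast : (t : ℤ) = tz := Int.toNat_of_nonneg htz1
    have htm : t < m := by
      have : (t : ℤ) < m := by rw [htcast]; linarith
      exact_mod_cast this
    have hPa : Pcond m a i j2 t := by
      rw [pcond_iff_hza]
      intro j' h1 h2
      have hj'ge : hza m a j2 ≤ hza m a j' := by
        rcases eq_or_lt_of_le h2 with he | hl
        · rw [he]
        · exact hamax j' h1 hl
      rw [htcast]
      simp only [hΔdef] at htzΔ
      linarith
    have hPb := hphi.2 t htm i j2 hiSi.2.1 hPa
    have hPbj2 : (t : ℤ) < hza m b j2 - hza m b i :=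
      (pcond_iff_hza.mp hPb) j2 hiSi.2.1 le_rfl
    have he1 : hza m b j2 = hza m a j2 := by simp only [hza]; rw [hbj2]
    have he2 : hza m a i + 1 ≤ hza m b i := by
      simp only [hza]
      have : (b i : ℤ) + 1 ≤ a i := by exact_mod_cast hbi
      linarith
    rcases le_or_gt Δ (m : ℤ) with hcase | hcase
    · have hteq : tz = Δ - 1 := by simp only [htzdef, min_eq_left hcase]
      rw [htcast, hteq] at hPbj2
      simp only [hΔdef] at hPbj2
      linarith
    · have hteq : tz = (m : ℤ) - 1 := by
        simp only [htzdef, min_eq_right (le_of_lt hcase)]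
      -- key : hza m a j2 < hza m b i + m
      have hi1lt : i.val + 1 < n := by
        have h1 : i.val < j2.val := hiSi.2.1
        have := j2.isLt; omega
      set i1 : Fin n := ⟨i.val + 1, hi1lt⟩ with hi1def
      have hii1 : i < i1 := by rw [Fin.lt_def]; simp [hi1def]
      have hi1j2 : i1 ≤ j2 := by
        rw [Fin.le_def]; simp only [hi1def]; exact hiSi.2.1
      have hb_step : hza m b i1 ≤ hza m b i + m := by
        simp only [hza, hi1def]
        have : b i ≤ b i1 := hb.1 (le_of_lt hii1)
        have hc : (b i : ℤ) ≤ b i1 := by exact_mod_cast this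
        push_cast
        linarith
      have hba1 : hza m a i1 ≤ hza m b i1 := by
        simp only [hza]
        have : b i1 ≤ a i1 := hphi.1 i1
        have hc : (b i1 : ℤ) ≤ a i1 := by exact_mod_cast this
        linarith
      have hkey : hza m a j2 < hza m b i + m := by
        rcases eq_or_lt_of_le hi1j2 with he | hl
        · by_contra hcon
          push_neg at hcon
          have hcomb1 : hza m b j2 ≤ hza m b i + m := he ▸ hb_step
          have hcomb2 : hza m b j2 = hza m b i + m := le_antisymm hcomb1 (by rw [he1]; exact hcon)
          have hbb : b j2 = b i := by
            simp only [hza] at hcomb2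
            have hv : (j2.val : ℤ) = i.val + 1 := by rw [← he]; simp [hi1def]
            rw [hv] at hcomb2
            have : (b j2 : ℤ) = b i := by push_cast at hcomb2; linarith
            exact_mod_cast this
          have h1 : a i ≤ a j2 := hmono (le_of_lt hiSi.2.1)
          omega
        · have h1 : hza m a j2 ≤ hza m a i1 := hamax i1 hii1 hl
          by_contra hcon
          push_neg at hcon
          have e1 : hza m a i1 = hza m a j2 := le_antisymm (by linarith) h1
          have e2 : hza m b i1 = hza m a i1 := le_antisymm (by linarith) hba1
          have hbi1 : b i1 = a i1 := by
            simp only [hza] at e2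
            have : (b i1 : ℤ) = a i1 := by linarith
            exact_mod_cast this
          have hi1T : i1 ∈ T := Finset.mem_filter.mpr
            ⟨Finset.mem_univ _, lt_of_le_of_lt hiSi.1 hii1,
              le_trans (le_of_lt hl) hj2k0, hbi1⟩
          exact absurd (hlexmin i1 hi1T e1) (not_le.mpr hl)
      rw [htcast, hteq, he1] at hPbj2
      linarith
  -- pointwise b ≤ c
  have hbc : ∀ j, b j ≤ c j := by
    intro j
    simp only [hcdef]
    by_cases hseg : p ≤ j ∧ j ≤ k0
    · rw [if_pos hseg]
      rcases eq_or_lt_of_le hseg.1 with he | hl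
      · have : b p < a p := hpS
        rw [← he]; omega
      · have := hT j hl hseg.2; omega
    · rw [if_neg hseg]; exact hphi.1 j
  -- Phi c b
  have hphicb : Phi m c b := by
    refine ⟨hbc, ?_⟩
    intro t ht i0 k1 hik hPc
    by_cases hi0p : i0 < p
    · have hbi0 : b i0 = a i0 := hpmin i0 hi0p
      have hci0 : c i0 = a i0 := by
        simp only [hcdef]
        rw [if_neg (fun hh => absurd hh.1 (not_le.mpr hi0p))]
      intro j hj1 hj2
      have h1 := hPc j hj1 hj2
      have h2 : (b j : ℤ) ≤ c j := by exact_mod_cast hbc j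
      rw [hbi0, ← hci0]
      linarith
    · have hple2 : p ≤ i0 := not_lt.mp hi0p
      have hPa : Pcond m a i0 k1 t := by
        intro j hj1 hj2
        have h1 := hPc j hj1 hj2
        have hcomp : (a j : ℤ) - a i0 ≤ (c j : ℤ) - c i0 := by
          by_cases hsi : i0 ≤ k0
          · have hci0 : c i0 = a i0 - 1 := by simp only [hcdef, if_pos (And.intro hple2 hsi)]
            have h1ai0 : 1 ≤ a i0 := le_trans hap1 (hmono hple2)
            by_cases hsj : j ≤ k0
            · have hcj : c j = a j - 1 := by
                simp only [hcdef,
                  if_pos (And.intro (le_trans hple2 (le_of_lt hj1)) hsj)]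
              have h1aj : 1 ≤ a j := le_trans hap1 (hmono (le_trans hple2 (le_of_lt hj1)))
              rw [hci0, hcj]
              zify [h1ai0, h1aj]
              linarith
            · have hcj : c j = a j := by
                simp only [hcdef]
                exact if_neg (show ¬(p ≤ j ∧ j ≤ k0) from fun hh => hsj hh.2)
              rw [hci0, hcj]
              zify [h1ai0]
              linarith
          · have hci0 : c i0 = a i0 := by
              simp only [hcdef]
              exact if_neg (show ¬(p ≤ i0 ∧ i0 ≤ k0) from fun hh => hsi hh.2)
            have hcj : c j = a j := by
              have hnj : ¬ j ≤ k0 := fun hh => hsi (le_trans (le_of_lt hj1) hh)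
              simp only [hcdef]
              exact if_neg (show ¬(p ≤ j ∧ j ≤ k0) from fun hh => hnj hh.2)
            rw [hci0, hcj]
        linarith
      exact hphi.2 t ht i0 k1 hik hPa
  -- recursion
  have hsum : (∑ j, c j) < N := by
    rw [← hN]
    apply Finset.sum_lt_sum
    · intro x _
      simp only [hcdef]
      split <;> omega
    · refine ⟨p, Finset.mem_univ p, ?_⟩
      simp only [hcdef, if_pos (And.intro le_rfl hpk0fin)]
      omega
  exact Relation.ReflTransGen.head hcov (ih _ hsum c rfl hcDyck hphicb)

/-- length of the run of `D` ending at `j` -/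
def runD (D : Finset ℕ) : ℕ → ℕ
  | 0 => 0
  | j + 1 => if j + 1 ∈ D then runD D j + 1 else 0

lemma runD_le (D : Finset ℕ) : ∀ j, runD D j ≤ j
  | 0 => le_rfl
  | j + 1 => by
      rw [runD]
      split
      · exact Nat.succ_le_succ (runD_le D j)
      · exact Nat.zero_le _

lemma runD_pos_mem {D : Finset ℕ} {j : ℕ} (h : 0 < runD D j) : j ∈ D := by
  cases j with
  | zero => simp [runD] at h
  | succ j =>
      rw [runD] at h
      by_cases hm : j + 1 ∈ D
      · exact hm
      · rw [if_neg hm] at h; omega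

lemma runD_mem {D : Finset ℕ} {j : ℕ} (hj : 0 < j) (h : j ∈ D) :
    runD D j = runD D (j - 1) + 1 := by
  obtain ⟨s, rfl⟩ : ∃ s, j = s + 1 := ⟨j - 1, by omega⟩
  rw [runD, if_pos h]
  simp

lemma runD_step (D : Finset ℕ) (j : ℕ) : runD D (j + 1) ≤ runD D j + 1 := by
  rw [runD]; split <;> omega

lemma runD_add (D : Finset ℕ) (x d : ℕ) : runD D (x + d) ≤ runD D x + d := by
  induction d with
  | zero => simp
  | succ d ihd =>
      have h1 := runD_step D (x + d)
      have h2 : runD D (x + (d + 1)) = runD D (x + d + 1) := rfl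
      omega

/-- the join of the atoms indexed by D -/
def Jf (m : ℕ) (D : Finset ℕ) {n : ℕ} : Fin n → ℕ := fun j => m * j.val - runD D j.val

lemma runD_le_mul {m : ℕ} (hm : 0 < m) (D : Finset ℕ) (j : ℕ) : runD D j ≤ m * j :=
  le_trans (runD_le D j) (by nlinarith)

lemma JfZ {m n : ℕ} (hm : 0 < m) (D : Finset ℕ) (j : Fin n) :
    (Jf m D j : ℤ) = m * j.val - runD D j.val := by
  have h := runD_le_mul hm D j.val
  simp only [Jf]
  omega

lemma Jf_isDyck {m n : ℕ} (hm : 0 < m) (D : Finset ℕ) : IsDyck m n (Jf m D) := by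
  constructor
  · intro i j hij
    rw [Fin.le_def] at hij
    have key : ∀ x y : ℕ, x ≤ y → m * x - runD D x ≤ m * y - runD D y := by
      intro x y hxy
      induction y with
      | zero => simp_all
      | succ y ihy =>
          rcases Nat.lt_or_ge x (y + 1) with hlt | hge
          · have h1 := ihy (by omega)
            have h2 := runD_step D y
            have h3 := runD_le_mul hm D y
            have h4 : m * (y + 1) = m * y + m := by ring
            omega
          · have : x = y + 1 := by omega
            subst this; exact le_rfl
    exact key i.val j.val hij
  · intro i; exact Nat.sub_le _ _

/-- the condition for the atom at r to lie below a -/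
def Cr (m : ℕ) {n : ℕ} (a : Fin n → ℕ) (r : ℕ) : Prop :=
  ∃ hr : r < n, 0 < r ∧ a ⟨r, hr⟩ < m * r ∧
    a ⟨r, hr⟩ < a ⟨r - 1, lt_of_le_of_lt (Nat.sub_le r 1) hr⟩ + m

noncomputable def Aset (m n : ℕ) (a : Fin n → ℕ) : Finset ℕ :=
  (Finset.Ico 1 n).filter (Cr m a)

lemma Aset_subset (m n : ℕ) (a : Fin n → ℕ) : Aset m n a ⊆ Finset.Ico 1 n :=
  Finset.filter_subset _ _

lemma mem_Aset {m n : ℕ} {a : Fin n → ℕ} {r : ℕ} :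
    r ∈ Aset m n a ↔ Cr m a r := by
  unfold Aset
  rw [Finset.mem_filter, Finset.mem_Ico]
  constructor
  · exact fun h => h.2
  · intro h; obtain ⟨hr, h0, -, -⟩ := id h; exact ⟨⟨h0, hr⟩, h⟩

/-- L1: pointwise bound from the C conditions -/
lemma pointwise_of_C {m n : ℕ} {a : Fin n → ℕ} {D : Finset ℕ}
    (ha : IsDyck m n a) (hC : ∀ r ∈ D, Cr m a r) :
    ∀ jv (h : jv < n), a ⟨jv, h⟩ + runD D jv ≤ m * jv := by
  intro jv
  induction jv with
  | zero => intro h; simpa [runD] using ha.2 ⟨0, h⟩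
  | succ j ihj =>
      intro h
      by_cases hmem : (j + 1) ∈ D
      · obtain ⟨hr, h0, hb1, hb2⟩ := hC _ hmem
        have hstep : a ⟨j + 1, h⟩ < a ⟨j, by omega⟩ + m := by
          have : a (⟨j + 1 - 1, lt_of_le_of_lt (Nat.sub_le (j+1) 1) hr⟩ : Fin n)
              = a ⟨j, by omega⟩ := by congr 1
          have h2 : a (⟨j + 1, hr⟩ : Fin n) = a ⟨j + 1, h⟩ := by congr 1
          omega
        have hih := ihj (by omega)
        have hrun : runD D (j + 1) = runD D j + 1 := by rw [runD, if_pos hmem]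
        have hmul : m * (j + 1) = m * j + m := by ring
        omega
      · have hrun : runD D (j + 1) = 0 := by rw [runD, if_neg hmem]
        have := ha.2 ⟨j + 1, h⟩
        simp only [hrun]
        simpa using this

/-- L2: Phi (Jf D) a from the C conditions -/
lemma phi_J_of_C {m n : ℕ} (hm : 0 < m) {a : Fin n → ℕ} {D : Finset ℕ}
    (ha : IsDyck m n a) (hC : ∀ r ∈ D, Cr m a r) :
    Phi m (Jf m D) a := by
  constructor
  · intro j
    have h1 := pointwise_of_C ha hC j.val j.isLt
    have h2 : a ⟨j.val, j.isLt⟩ = a j := rfl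
    exact Nat.le_sub_of_add_le (by omega)
  · intro t ht i k hik hPJ
    have hrun : ∀ j' : Fin n, i < j' → j' ≤ k →
        runD D i.val + t + 1 ≤ runD D j'.val := by
      intro j' h1 h2
      have h3 := hPJ j' h1 h2
      rw [JfZ hm, JfZ hm] at h3
      have hr : (m : ℤ) * ((j'.val : ℤ) - i.val) = m * j'.val - m * i.val := by ring
      have : (runD D i.val : ℤ) + t + 1 ≤ runD D j'.val := by linarith
      exact_mod_cast this
    have hmem : ∀ j' : Fin n, i < j' → j' ≤ k → j'.val ∈ D := by
      intro j' h1 h2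
      exact runD_pos_mem (by have := hrun j' h1 h2; omega)
    -- chain bound
    have aux : ∀ d (jv : ℕ) (hjn : jv < n), i.val < jv → jv ≤ k.val →
        jv = i.val + d + 1 → (a ⟨jv, hjn⟩ : ℤ) ≤ a i + (m - 1 : ℤ) * (d + 1) := by
      intro d
      induction d with
      | zero =>
          intro jv hjn h1 h2 h3
          have hmemv : jv ∈ D := hmem ⟨jv, hjn⟩ (by rw [Fin.lt_def]; exact h1)
            (by rw [Fin.le_def]; exact h2)
          obtain ⟨hr, h0, hb1, hb2⟩ := hC jv hmemv
          have e1 : a (⟨jv, hr⟩ : Fin n) = a ⟨jv, hjn⟩ := rfl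
          have e2 : a (⟨jv - 1, lt_of_le_of_lt (Nat.sub_le jv 1) hr⟩ : Fin n) = a i := by
            congr 1
            exact Fin.ext (by simp; omega)
          rw [e1, e2] at hb2
          have : (a ⟨jv, hjn⟩ : ℤ) < a i + m := by exact_mod_cast hb2
          push_cast
          linarith
      | succ d ihd =>
          intro jv hjn h1 h2 h3
          have hmemv : jv ∈ D := hmem ⟨jv, hjn⟩ (by rw [Fin.lt_def]; exact h1)
            (by rw [Fin.le_def]; exact h2)
          obtain ⟨hr, h0, hb1, hb2⟩ := hC jv hmemv
          have hjm1n : jv - 1 < n := by omega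
          have hprev := ihd (jv - 1) hjm1n (by omega) (by omega) (by omega)
          have e1 : a (⟨jv, hr⟩ : Fin n) = a ⟨jv, hjn⟩ := rfl
          have e2 : a (⟨jv - 1, lt_of_le_of_lt (Nat.sub_le jv 1) hr⟩ : Fin n)
              = a ⟨jv - 1, hjm1n⟩ := rfl
          rw [e1, e2] at hb2
          have hc : (a ⟨jv, hjn⟩ : ℤ) < a ⟨jv - 1, hjm1n⟩ + m := by exact_mod_cast hb2
          have hring : ((m : ℤ) - 1) * ((d : ℤ) + 1 + 1)
              = ((m : ℤ) - 1) * ((d : ℤ) + 1) + ((m : ℤ) - 1) := by ring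
          push_cast
          linarith
    intro j hj1 hj2
    have hd : j.val = i.val + (j.val - i.val - 1) + 1 := by
      have : i.val < j.val := hj1
      omega
    have hbound := aux (j.val - i.val - 1) j.val j.isLt hj1 hj2 hd
    have heta : a ⟨j.val, j.isLt⟩ = a j := rfl
    rw [heta] at hbound
    -- t + 1 ≤ j - i
    have hstep : runD D j.val ≤ runD D i.val + (j.val - i.val) := by
      have h1 : i.val + (j.val - i.val) = j.val := by
        have : i.val < j.val := hj1
        omega
      have := runD_add D i.val (j.val - i.val)
      rw [h1] at this
      exact this
    have htj : t + 1 ≤ j.val - i.val := by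
      have := hrun j hj1 hj2
      omega
    have hiv : i.val < j.val := hj1
    have hdz : ((j.val - i.val - 1 : ℕ) : ℤ) + 1 = (j.val : ℤ) - i.val := by omega
    have htz : (t : ℤ) + 1 ≤ (j.val : ℤ) - i.val := by omega
    have hr2 : (m : ℤ) * ((j.val : ℤ) - i.val)
        = (m - 1 : ℤ) * ((j.val : ℤ) - i.val) + ((j.val : ℤ) - i.val) := by ring
    rw [hdz] at hbound
    linarith

/-- L3: the C conditions from Phi (Jf D) a -/
lemma C_of_phi_J {m n : ℕ} (hm : 0 < m) {a : Fin n → ℕ} {D : Finset ℕ}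
    (hD : D ⊆ Finset.Ico 1 n) (hphi : Phi m (Jf m D) a) :
    ∀ r ∈ D, Cr m a r := by
  intro r hr
  have hrn : r < n ∧ 1 ≤ r := by
    have := hD hr; rw [Finset.mem_Ico] at this; exact ⟨this.2, this.1⟩
  have hrunpos : 0 < runD D r := by
    rw [runD_mem hrn.2 hr]; omega
  refine ⟨hrn.1, hrn.2, ?_, ?_⟩
  · -- a r < m * r
    have h1 := hphi.1 ⟨r, hrn.1⟩
    have h2 : Jf m D ⟨r, hrn.1⟩ = m * r - runD D r := rfl
    have h3 : 0 < m * r := Nat.mul_pos hm hrn.2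
    omega
  · -- a r < a (r-1) + m
    have hik : (⟨r - 1, lt_of_le_of_lt (Nat.sub_le r 1) hrn.1⟩ : Fin n) < ⟨r, hrn.1⟩ := by
      rw [Fin.lt_def]; simp; omega
    have hPJ : Pcond m (Jf m D) ⟨r - 1, lt_of_le_of_lt (Nat.sub_le r 1) hrn.1⟩ ⟨r, hrn.1⟩ 0 := by
      intro j hj1 hj2
      have hjv : j.val = r := by
        rw [Fin.lt_def] at hj1; rw [Fin.le_def] at hj2
        simp at hj1 hj2; omega
      have hje : j = ⟨r, hrn.1⟩ := Fin.ext hjv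
      subst hje
      rw [JfZ hm, JfZ hm]
      have hrm : runD D r = runD D (r - 1) + 1 := runD_mem hrn.2 hr
      have hrr : ((r : ℤ)) - ((r - 1 : ℕ) : ℤ) = 1 := by omega
      simp only [hjv]
      rw [hrr, hrm]
      have hc : ((r - 1 : ℕ) : ℤ) = (r : ℤ) - 1 := by omega
      rw [hc]
      push_cast
      ring_nf
      linarith
    have hPa := hphi.2 0 hm _ _ hik hPJ
    have := hPa ⟨r, hrn.1⟩ hik le_rfl
    have hrr : ((r : ℤ)) - ((r - 1 : ℕ) : ℤ) = 1 := by omega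
    simp only [hrr] at this
    have h2 : (a ⟨r, hrn.1⟩ : ℤ) < a ⟨r - 1, lt_of_le_of_lt (Nat.sub_le r 1) hrn.1⟩ + m := by
      push_cast at this
      linarith [this]
    exact_mod_cast h2

/-- L4/L5: Aset of a join recovers the index set. -/
lemma Aset_Jf {m n : ℕ} (hm : 0 < m) {D : Finset ℕ} (hD : D ⊆ Finset.Ico 1 n) :
    Aset m n (Jf m D) = D := by
  ext r
  rw [mem_Aset]
  constructor
  · intro hCr
    obtain ⟨hr, h0, hb1, hb2⟩ := hCr
    have h2 : Jf m D ⟨r, hr⟩ = m * r - runD D r := rfl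
    have h3 : 0 < runD D r := by omega
    exact runD_pos_mem h3
  · intro hrD
    exact C_of_phi_J hm hD (phi_refl m (Jf m D)) r hrD

/-- L6: Aset is empty iff a = botSeq. -/
lemma Aset_empty_iff {m n : ℕ} (hm : 0 < m) {a : Fin n → ℕ} (ha : IsDyck m n a) :
    Aset m n a = ∅ ↔ a = botSeq m n := by
  constructor
  · intro hA
    by_contra hne
    have hex : ∃ j : Fin n, a j ≠ m * j.val := by
      by_contra hcon
      push_neg at hcon
      exact hne (funext fun j => hcon j)
    set S := Finset.univ.filter (fun j : Fin n => a j ≠ m * j.val) with hSdef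
    have hSne : S.Nonempty := by
      obtain ⟨j, hj⟩ := hex
      exact ⟨j, Finset.mem_filter.mpr ⟨Finset.mem_univ _, hj⟩⟩
    set r := S.min' hSne with hrdef
    have hrS : a r ≠ m * r.val := (Finset.mem_filter.mp (S.min'_mem hSne)).2
    have hrlt : a r < m * r.val := lt_of_le_of_ne (ha.2 r) hrS
    have hr0 : 0 < r.val := by
      by_contra h0
      have : r.val = 0 := by omega
      rw [this] at hrlt
      simp at hrlt
    have hrm1n : r.val - 1 < n := lt_of_le_of_lt (Nat.sub_le _ _) r.isLt
    have hrm1 : a ⟨r.val - 1, hrm1n⟩ = m * (r.val - 1) := by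
      by_contra hne2
      have hmem : (⟨r.val - 1, hrm1n⟩ : Fin n) ∈ S :=
        Finset.mem_filter.mpr ⟨Finset.mem_univ _, hne2⟩
      have := S.min'_le _ hmem
      rw [← hrdef] at this
      rw [Fin.le_def] at this
      simp at this
      omega
    have hCr : Cr m a r.val := by
      refine ⟨r.isLt, hr0, ?_, ?_⟩
      · have : a ⟨r.val, r.isLt⟩ = a r := rfl
        omega
      · have e1 : a (⟨r.val, r.isLt⟩ : Fin n) = a r := rfl
        have e2 : a (⟨r.val - 1, lt_of_le_of_lt (Nat.sub_le r.val 1) r.isLt⟩ : Fin n)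
            = a ⟨r.val - 1, hrm1n⟩ := rfl
        rw [e1, e2, hrm1]
        have : m * r.val = m * (r.val - 1) + m := by
          have h1 : r.val = (r.val - 1) + 1 := by omega
          calc m * r.val = m * ((r.val - 1) + 1) := by rw [← h1]
            _ = m * (r.val - 1) + m := Nat.mul_succ _ _
        omega
    have : r.val ∈ Aset m n a := mem_Aset.mpr hCr
    rw [hA] at this
    simp at this
  · intro h
    subst h
    rw [Finset.eq_empty_iff_forall_notMem]
    intro r hr
    obtain ⟨hrn, h0, hb1, hb2⟩ := mem_Aset.mp hr
    have : botSeq m n ⟨r, hrn⟩ = m * r := rfl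
    omega

/-- L7: botSeq is Phi-below everything. -/
lemma phi_bot {m n : ℕ} {a : Fin n → ℕ} (ha : IsDyck m n a) :
    Phi m (botSeq m n) a := by
  constructor
  · exact ha.2
  · intro t ht i k hik hP
    exfalso
    have := hP k hik le_rfl
    have hb1 : botSeq m n k = m * k.val := rfl
    have hb2 : botSeq m n i = m * i.val := rfl
    rw [hb1, hb2] at this
    have hr : (m : ℤ) * ((k.val : ℤ) - i.val) = m * k.val - m * i.val := by ring
    have ht0 : (0 : ℤ) ≤ t := Int.ofNat_nonneg t
    push_cast at this
    linarith

lemma tamle_phi {m n : ℕ} {a b : Fin n → ℕ} (ha : IsDyck m n a) (h : TamariLE m n a b) :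
    IsDyck m n b ∧ Phi m a b := by
  induction h with
  | refl => exact ⟨ha, phi_refl m a⟩
  | tail hab hbc ih =>
      obtain ⟨hd, hphi⟩ := ih
      obtain ⟨hd2, hphi2⟩ := covers_phi hd hbc
      exact ⟨hd2, phi_trans hphi hphi2⟩

noncomputable instance tamFintype (m n : ℕ) : Fintype (Tam m n) := by
  apply Fintype.ofInjective
    (fun (a : Tam m n) (j : Fin n) =>
      (⟨a.1 j, lt_of_le_of_lt
        (le_trans (a.2.2 j) (Nat.mul_le_mul_left m (le_of_lt j.isLt)))
        (Nat.lt_succ_self _)⟩ : Fin (m * n + 1)))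
  intro x y hxy
  apply Subtype.ext
  funext j
  exact congrArg Fin.val (congrFun hxy j)

noncomputable instance (m n : ℕ) : Fintype {a : Fin n → ℕ // IsDyck m n a} :=
  tamFintype m n

/-- TamariLE on Dyck words equals Phi. -/
lemma tamle_iff_phi {m n : ℕ} (hm : 0 < m) {a b : Fin n → ℕ}
    (ha : IsDyck m n a) (hb : IsDyck m n b) :
    TamariLE m n a b ↔ Phi m a b :=
  ⟨fun h => (tamle_phi ha h).2, fun h => phi_tamle hm hb _ a rfl ha h⟩

/-- the claimed Möbius values -/
noncomputable def nu (m n : ℕ) : Tam m n → ℤ := fun a =>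
  if a.1 = Jf m (Aset m n a.1) then (-1 : ℤ) ^ (Aset m n a.1).card else 0

lemma nu_ne_zero {m n : ℕ} {a : Tam m n} (h : nu m n a ≠ 0) :
    a.1 = Jf m (Aset m n a.1) := by
  by_contra hcon
  rw [nu, if_neg hcon] at h
  exact h rfl

/-- the key sum identity for nu -/
lemma nu_sum {m n : ℕ} (hm : 0 < m) (a : Tam m n) :
    (∑ c ∈ Finset.univ.filter (fun c : Tam m n => Phi m c.1 a.1), nu m n c)
      = if a.1 = botSeq m n then 1 else 0 := by
  classical
  rw [← Finset.sum_filter_ne_zero (f := nu m n)]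
  rw [Finset.filter_filter]
  have key : (∑ c ∈ Finset.univ.filter
        (fun c : Tam m n => Phi m c.1 a.1 ∧ nu m n c ≠ 0), nu m n c)
      = ∑ D ∈ (Aset m n a.1).powerset, (-1 : ℤ) ^ D.card := by
    apply Finset.sum_nbij' (fun c => Aset m n c.1)
      (fun D => (⟨Jf m D, Jf_isDyck hm D⟩ : Tam m n))
    · intro c hc
      obtain ⟨-, hphi, hnu⟩ := (Finset.mem_filter (a := c) (s := Finset.univ) (p := fun c : Tam m n => Phi m c.1 a.1 ∧ nu m n c ≠ 0)).mp (by rw [Finset.filter_congr_decidable] at hc; exact hc)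
      rw [Finset.mem_powerset]
      intro r hr
      rw [mem_Aset]
      have hJ := nu_ne_zero hnu
      rw [hJ] at hphi
      exact C_of_phi_J hm (Aset_subset m n c.1) hphi r hr
    · intro D hD
      rw [Finset.mem_powerset] at hD
      have hDIco : D ⊆ Finset.Ico 1 n := subset_trans hD (Aset_subset m n a.1)
      refine (Finset.mem_filter (s := Finset.univ) (p := fun c : Tam m n => Phi m c.1 a.1 ∧ nu m n c ≠ 0)).mpr ⟨Finset.mem_univ _, ?_, ?_⟩
      · exact phi_J_of_C hm a.2 (fun r hr => mem_Aset.mp (hD hr))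
      · show nu m n ⟨Jf m D, Jf_isDyck hm D⟩ ≠ 0
        unfold nu
        have : (⟨Jf m D, Jf_isDyck hm D⟩ : Tam m n).1 = Jf m D := rfl
        rw [this, Aset_Jf hm hDIco, if_pos rfl]
        exact pow_ne_zero _ (by norm_num)
    · intro c hc
      obtain ⟨-, hphi, hnu⟩ := (Finset.mem_filter (a := c) (s := Finset.univ) (p := fun c : Tam m n => Phi m c.1 a.1 ∧ nu m n c ≠ 0)).mp (by rw [Finset.filter_congr_decidable] at hc; exact hc)
      exact Subtype.ext (nu_ne_zero hnu).symm
    · intro D hD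
      rw [Finset.mem_powerset] at hD
      exact Aset_Jf hm (subset_trans hD (Aset_subset m n a.1))
    · intro c hc
      obtain ⟨-, hphi, hnu⟩ := (Finset.mem_filter (a := c) (s := Finset.univ) (p := fun c : Tam m n => Phi m c.1 a.1 ∧ nu m n c ≠ 0)).mp (by rw [Finset.filter_congr_decidable] at hc; exact hc)
      unfold nu; rw [if_pos (nu_ne_zero hnu)]
  rw [key, Finset.sum_powerset_neg_one_pow_card]
  exact if_congr (Aset_empty_iff hm a.2) rfl rfl

/-- the weight used for induction -/
noncomputable def wt (m : ℕ) {n : ℕ} (a : Tam m n) : ℕ := ∑ j, (m * j.val - a.1 j)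

lemma wt_lt {m n : ℕ} {a c : Tam m n} (hphi : Phi m c.1 a.1) (hne : c ≠ a) :
    wt m c < wt m a := by
  apply Finset.sum_lt_sum
  · intro j _
    have h1 := hphi.1 j
    omega
  · have hex : ∃ j : Fin n, a.1 j ≠ c.1 j := by
      by_contra hcon
      push_neg at hcon
      exact hne (Subtype.ext (funext fun j => hcon j)).symm
    obtain ⟨j, hj⟩ := hex
    refine ⟨j, Finset.mem_univ _, ?_⟩
    have h1 := hphi.1 j
    have h2 := c.2.2 j
    omega

lemma mu_eq_nu {m n : ℕ} (hm : 0 < m)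
    (μ : Tam m n → Tam m n → ℤ) (hμ : IsMobius m n μ) :
    ∀ (a : Tam m n), μ ⟨botSeq m n, botSeq_isDyck m n⟩ a = nu m n a := by
  classical
  set bot : Tam m n := ⟨botSeq m n, botSeq_isDyck m n⟩ with hbot
  suffices H : ∀ N (a : Tam m n), wt m a = N → μ bot a = nu m n a by
    intro a; exact H (wt m a) a rfl
  intro N
  induction N using Nat.strong_induction_on with
  | _ N ih =>
  intro a ha
  have hba : TamariLE m n bot.1 a.1 :=
    (tamle_iff_phi hm bot.2 a.2).mpr (phi_bot a.2)
  have hset : {c : Tam m n | TamariLE m n bot.1 c.1 ∧ TamariLE m n c.1 a.1}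
      = ↑(Finset.univ.filter (fun c : Tam m n => Phi m c.1 a.1)) := by
    ext c
    simp only [Set.mem_setOf_eq, Finset.coe_filter, Finset.mem_univ, true_and,
      Set.mem_setOf_eq]
    constructor
    · rintro ⟨-, h2⟩
      exact (tamle_iff_phi hm c.2 a.2).mp h2
    · intro h
      exact ⟨(tamle_iff_phi hm bot.2 c.2).mpr (phi_bot c.2),
        (tamle_iff_phi hm c.2 a.2).mpr h⟩
  have hmob := hμ bot a hba
  rw [hset, finsum_mem_coe_finset] at hmob
  set filt := Finset.univ.filter (fun c : Tam m n => Phi m c.1 a.1) with hfilt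
  have hamem : a ∈ filt := Finset.mem_filter.mpr ⟨Finset.mem_univ _, phi_refl m a.1⟩
  have hsplitmu := Finset.add_sum_erase filt (fun c => μ bot c) hamem
  have hsplitnu := Finset.add_sum_erase filt (fun c => nu m n c) hamem
  have herase : ∀ c ∈ filt.erase a, μ bot c = nu m n c := by
    intro c hc
    have hcne : c ≠ a := Finset.ne_of_mem_erase hc
    have hcm : c ∈ filt := Finset.mem_of_mem_erase hc
    have hphi : Phi m c.1 a.1 := (Finset.mem_filter.mp hcm).2
    exact ih (wt m c) (by rw [← ha]; exact wt_lt hphi hcne) c rfl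
  have hsum_eq : (∑ c ∈ filt.erase a, μ bot c) = ∑ c ∈ filt.erase a, nu m n c :=
    Finset.sum_congr rfl herase
  have hnusum := nu_sum hm a
  rw [← hfilt] at hnusum
  have hcond : (if bot = a then (1 : ℤ) else 0) = if a.1 = botSeq m n then 1 else 0 := by
    by_cases h : bot = a
    · rw [if_pos h, if_pos (by rw [← h])]
    · rw [if_neg h, if_neg (fun hc => h (Subtype.ext hc.symm))]
  have hgoal : μ bot a = nu m n a := by linarith
  exact hgoal


/-- The number of elements `a` of `T_n^(m)` with `μ(0̂, a) ≠ 0` is `2^(n-1)`. -/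
theorem tamari_spherical_from_bot_count (m n : ℕ) (hm : 0 < m) (hn : 0 < n)
    (μ : Tam m n → Tam m n → ℤ) (hμ : IsMobius m n μ) :
    Nat.card {a : Tam m n // μ ⟨botSeq m n, botSeq_isDyck m n⟩ a ≠ 0} = 2 ^ (n - 1) := by
  classical
  have hmu := mu_eq_nu hm μ hμ
  have e1 : {a : Tam m n // μ ⟨botSeq m n, botSeq_isDyck m n⟩ a ≠ 0}
      ≃ {a : Tam m n // nu m n a ≠ 0} :=
    Equiv.subtypeEquivRight (fun a => by rw [hmu a])
  have e2 : {a : Tam m n // nu m n a ≠ 0}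
      ≃ {D : Finset ℕ // D ∈ (Finset.Ico 1 n).powerset} := by
    refine ⟨fun a => ⟨Aset m n a.1.1, Finset.mem_powerset.mpr (Aset_subset m n a.1.1)⟩,
      fun D => ⟨⟨Jf m D.1, Jf_isDyck hm D.1⟩, ?_⟩, ?_, ?_⟩
    · have hDIco : D.1 ⊆ Finset.Ico 1 n := Finset.mem_powerset.mp D.2
      show nu m n ⟨Jf m D.1, Jf_isDyck hm D.1⟩ ≠ 0
      unfold nu
      have hh : (⟨Jf m D.1, Jf_isDyck hm D.1⟩ : Tam m n).1 = Jf m D.1 := rfl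
      rw [hh, Aset_Jf hm hDIco, if_pos rfl]
      exact pow_ne_zero _ (by norm_num)
    · intro a
      apply Subtype.ext
      apply Subtype.ext
      exact (nu_ne_zero a.2).symm
    · intro D
      apply Subtype.ext
      show Aset m n (Jf m D.1) = D.1
      exact Aset_Jf hm (Finset.mem_powerset.mp D.2)
  rw [Nat.card_congr (e1.trans e2), Nat.card_eq_fintype_card, Fintype.card_coe,
    Finset.card_powerset, Nat.card_Ico]
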